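/- Let K ≥ 2, L ≥ 1 and let X be a balanced K×L matrix with entries in {0,1}, with balanced parameters a and b satisfying a ≠ b and a + (K−1)b ≠ 0. Then X Xᵀ is invertible and Tr((X Xᵀ)⁻¹) = (K/(L(a−b))) · (1 − b/(a+(K−1)b)). -/

import Mathlib

open Finset Matrix

/-- For a balanced `K × L` `{0,1}` matrix `X` (`K ≥ 2`, `L ≥ 1`)
with balanced parameters `a, b` satisfying `a ≠ b` and `a + (K−1)b ≠ 0`,
the matrix `X Xᵀ` is invertible and
`Tr((X Xᵀ)⁻¹) = (K/(L(a−b))) (1 − b/(a+(K−1)b))`. -/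
theorem stmt6 (K L : ℕ) (hK : 2 ≤ K) (hL : 1 ≤ L)
    (X : Matrix (Fin K) (Fin L) ℝ)
    (h01 : ∀ k l, X k l = 0 ∨ X k l = 1)
    (hbal : ∀ Θ₁ Θ₂ : Finset (Fin K), Θ₁.Nonempty → Θ₂.Nonempty →
      Θ₁.card = Θ₂.card →
      ∑ l : Fin L, ∏ k ∈ Θ₁, X k l = ∑ l : Fin L, ∏ k ∈ Θ₂, X k l)
    (a b : ℝ)
    (ha : ∀ Θ : Finset (Fin K), Θ.card = 1 →
      ∑ l : Fin L, ∏ k ∈ Θ, X k l = (L : ℝ) * a)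
    (hb : ∀ Θ : Finset (Fin K), Θ.card = 2 →
      ∑ l : Fin L, ∏ k ∈ Θ, X k l = (L : ℝ) * b)
    (hab : a ≠ b) (habK : a + ((K : ℝ) - 1) * b ≠ 0) :
    IsUnit (X * Xᵀ)
    ∧ Matrix.trace (X * Xᵀ)⁻¹
        = ((K : ℝ) / ((L : ℝ) * (a - b)))
            * (1 - b / (a + ((K : ℝ) - 1) * b)) := by
  set c : ℝ := (L : ℝ) * (a - b) with hc_def
  set s : ℝ := a + ((K : ℝ) - 1) * b with hs_def
  have hLne : (L : ℝ) ≠ 0 := Nat.cast_ne_zero.mpr (by omega)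
  have hc : c ≠ 0 := mul_ne_zero hLne (sub_ne_zero.mpr hab)
  set t : ℝ := b / s with ht_def
  set J : Matrix (Fin K) (Fin K) ℝ := Matrix.of (fun _ _ => (1 : ℝ)) with hJ_def
  -- entries of X * Xᵀ
  have hM : X * Xᵀ = c • (1 : Matrix (Fin K) (Fin K) ℝ) + ((L : ℝ) * b) • J := by
    ext i j
    by_cases hij : i = j
    · subst hij
      have h1 : ∑ l : Fin L, ∏ k ∈ ({i} : Finset (Fin K)), X k l = (L : ℝ) * a :=
        ha {i} (Finset.card_singleton i)
      simp only [Finset.prod_singleton] at h1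
      have : (X * Xᵀ) i i = ∑ l : Fin L, X i l * X i l := by
        simp [Matrix.mul_apply, Matrix.transpose_apply]
      have hsq : ∀ l, X i l * X i l = X i l := by
        intro l; rcases h01 i l with h | h <;> simp [h]
      simp only [hsq] at this
      rw [this, h1]
      simp [Matrix.one_apply, hJ_def, hc_def]
      ring
    · have hcard : ({i, j} : Finset (Fin K)).card = 2 := Finset.card_pair hij
      have h2 : ∑ l : Fin L, ∏ k ∈ ({i, j} : Finset (Fin K)), X k l = (L : ℝ) * b :=
        hb {i, j} hcard
      have hprod : ∀ l, ∏ k ∈ ({i, j} : Finset (Fin K)), X k l = X i l * X j l := by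
        intro l; exact Finset.prod_pair hij
      simp only [hprod] at h2
      have : (X * Xᵀ) i j = ∑ l : Fin L, X i l * X j l := by
        simp [Matrix.mul_apply, Matrix.transpose_apply]
      rw [this, h2]
      simp [Matrix.one_apply, hij, hJ_def]
  have hJJ : J * J = (K : ℝ) • J := by
    ext i j
    simp [hJ_def, Matrix.mul_apply]
  -- the candidate inverse
  set N : Matrix (Fin K) (Fin K) ℝ :=
    c⁻¹ • (1 : Matrix (Fin K) (Fin K) ℝ) + (-(c⁻¹ * t)) • J with hN_def
  have hst : b - t * s = 0 := by
    rw [ht_def]; field_simp; ring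
  have hMN : (X * Xᵀ) * N = 1 := by
    rw [hM, hN_def]
    rw [add_mul, mul_add, mul_add]
    rw [Matrix.smul_mul, Matrix.smul_mul, Matrix.smul_mul, Matrix.smul_mul,
      Matrix.mul_smul, Matrix.mul_smul, Matrix.mul_smul, Matrix.mul_smul,
      Matrix.one_mul, Matrix.mul_one, Matrix.one_mul, hJJ]
    rw [smul_smul, smul_smul, smul_smul, smul_smul, smul_smul]
    have e1 : c * c⁻¹ = 1 := mul_inv_cancel₀ hc
    rw [add_assoc, e1, one_smul, ← add_smul, ← add_smul]
    have hs0 : a + ((K : ℝ) - 1) * b ≠ 0 := by rw [← hs_def]; exact habK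
    have hab' : a - b ≠ 0 := sub_ne_zero.mpr hab
    have e2 : c * -(c⁻¹ * t) + ((L : ℝ) * b * c⁻¹ + (L : ℝ) * b * -(c⁻¹ * t) * (K : ℝ)) = 0 := by
      rw [ht_def, hc_def]
      field_simp
      rw [hs_def]
      ring
    rw [e2, zero_smul, add_zero]
  have hdet : IsUnit (X * Xᵀ).det := by
    have := congrArg Matrix.det hMN
    rw [Matrix.det_mul, Matrix.det_one] at this
    exact IsUnit.of_mul_eq_one _ this
  have hUnit : IsUnit (X * Xᵀ) := (Matrix.isUnit_iff_isUnit_det _).mpr hdet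
  refine ⟨hUnit, ?_⟩
  have hinv : (X * Xᵀ)⁻¹ = N := Matrix.inv_eq_right_inv hMN
  rw [hinv, hN_def]
  rw [Matrix.trace_add, Matrix.trace_smul, Matrix.trace_smul, Matrix.trace_one]
  have htrJ : Matrix.trace J = (K : ℝ) := by
    simp [hJ_def, Matrix.trace]
  rw [htrJ]
  rw [ht_def]
  simp only [Fintype.card_fin]
  field_simp
  have e1 : c * c⁻¹ = 1 := mul_inv_cancel₀ hc
  have e3 : s * s⁻¹ = 1 := mul_inv_cancel₀ habK
  clear_value N J t s c
  linear_combination ((s : ℝ) * K - K * b) * e1 - (K : ℝ) * b * c * c⁻¹ * e3
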